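/- If {a >_lex b >_lex d} and {b >_lex c >_lex d} are both sorted triples (cliques in the sorting graph 𝒢), then {a >_lex b >_lex c >_lex d} is also a clique in 𝒢, i.e., the pair (a,c) is also sorted. -/
import Mathlib


/-- The set `V_{n,d}^α` of nonnegative integer tuples with coordinate sum `d`
and coordinatewise bound `α`. -/
def VT (n d : ℕ) (α : Fin n → ℕ) : Set (Fin n → ℕ) :=
  {c | (∑ i, c i) = d ∧ ∀ i, c i ≤ α i}

/-- `a >_lex b`: the leftmost nonzero entry of `a - b` is positive. -/
def lexGT {n : ℕ} (a b : Fin n → ℕ) : Prop :=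
  ∃ i : Fin n, (∀ j, j < i → a j = b j) ∧ b i < a i

/-- `sort(a,b) = (a,b)` for Sturmfels' sorting operator: for every `t`, the prefix
sum of `a` up to `t` equals the ceiling of half the prefix sum of `a + b`. -/
def sortedPair {n : ℕ} (a b : Fin n → ℕ) : Prop :=
  ∀ t : Fin n, 2 * (∑ i ∈ Finset.Iic t, a i)
    = (∑ i ∈ Finset.Iic t, (a i + b i)) + (∑ i ∈ Finset.Iic t, (a i + b i)) % 2

/-- The sorting signature set `Δ(a,b)` of a sorted pair, recorded (0-indexed) as the
set of positions `t` where the prefix sum of `b` is one less than that of `a`. -/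
def sigSet {n : ℕ} (a b : Fin n → ℕ) : Finset (Fin n) :=
  Finset.univ.filter (fun t => (∑ i ∈ Finset.Iic t, b i) + 1 = ∑ i ∈ Finset.Iic t, a i)

/-- Adjacency in the sorting graph `𝒢(d,α)`. -/
def adjG {n : ℕ} (a b : Fin n → ℕ) : Prop :=
  (lexGT a b ∧ sortedPair a b) ∨ (lexGT b a ∧ sortedPair b a)

/-- A clique of the sorting graph `𝒢(d,α)`. -/
def isClique (n d : ℕ) (α : Fin n → ℕ) (S : Finset (Fin n → ℕ)) : Prop :=
  (↑S ⊆ VT n d α) ∧ ∀ a ∈ S, ∀ b ∈ S, a ≠ b → adjG a b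

/-- A maximal clique of the sorting graph `𝒢(d,α)`. -/
def isMaxClique (n d : ℕ) (α : Fin n → ℕ) (S : Finset (Fin n → ℕ)) : Prop :=
  isClique n d α S ∧ ∀ T, isClique n d α T → S ⊆ T → S = T

/-- If `{a >_lex b >_lex e}` and `{b >_lex c >_lex e}` are cliques in the sorting
graph `𝒢`, then `{a >_lex b >_lex c >_lex e}` is also a clique, i.e. `(a,c)` is
also a sorted pair. -/
theorem stmt5 (n d : ℕ) (α : Fin n → ℕ) (a b c e : Fin n → ℕ)
    (ha : a ∈ VT n d α) (hb : b ∈ VT n d α) (hc : c ∈ VT n d α) (he : e ∈ VT n d α)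
    (hab : lexGT a b) (hbc : lexGT b c) (hce : lexGT c e)
    (sab : sortedPair a b) (sbe : sortedPair b e) (sae : sortedPair a e)
    (sbc : sortedPair b c) (sce : sortedPair c e) :
    lexGT a c ∧ sortedPair a c := by
  constructor
  · obtain ⟨i, hi, hlt⟩ := hab
    obtain ⟨j, hj, hlt'⟩ := hbc
    rcases lt_trichotomy i j with h | h | h
    · exact ⟨i, fun k hk => (hi k hk).trans (hj k (hk.trans h)), hj i h ▸ hlt⟩
    · subst h
      exact ⟨i, fun k hk => (hi k hk).trans (hj k hk), hlt'.trans hlt⟩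
    · exact ⟨j, fun k hk => (hi k (hk.trans h)).trans (hj k hk),
        lt_of_lt_of_le hlt' (le_of_eq (hi j h).symm)⟩
  · intro t
    have h1 := sab t
    have h2 := sbe t
    have h3 := sae t
    have h4 := sbc t
    have h5 := sce t
    simp only [Finset.sum_add_distrib] at *
    omega
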